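/- Let U be an even MPO tensor such that U/√d is a graded normal non-degenerate tensor and U generates a type I fMPU with antiperiodic boundary conditions (U^{(N)} is unitary for every N ≥ 1). Then r(U)·ℓ(U) ≥ d², where r(U) and ℓ(U) are the right and left ranks of U. -/

import Mathlib

open Matrix Kronecker
open scoped ComplexOrder

namespace FQCA

noncomputable section

/-- The sign `(-1)^x` associated with a parity `x ∈ ℤ₂`. -/
def sgn (x : ZMod 2) : ℂ := (-1 : ℂ) ^ x.val

/-- Entrywise complex conjugation of a matrix. -/
def mconj {m n : Type*} (A : Matrix m n ℂ) : Matrix m n ℂ := A.map (starRingEnd ℂ)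

/-- A diagonal matrix with diagonal entries `±1`. -/
def IsParityMatrix {ν : Type*} (Z : Matrix ν ν ℂ) : Prop :=
  Z.IsDiag ∧ ∀ α, Z α α = 1 ∨ Z α α = -1

/-- An even tensor: `Z * A i = (-1)^{|i|} A i * Z`. -/
def EvenTensor {ι ν : Type*} [Fintype ν] (p : ι → ZMod 2)
    (A : ι → Matrix ν ν ℂ) (Z : Matrix ν ν ℂ) : Prop :=
  ∀ i, Z * A i = sgn (p i) • (A i * Z)

/-- The transfer matrix `E_A = Σ_i A^i ⊗ conj (A^i)`. -/
def transfer {ι ν : Type*} [Fintype ι] (A : ι → Matrix ν ν ℂ) :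
    Matrix (ν × ν) (ν × ν) ℂ :=
  ∑ i, (A i) ⊗ₖ (mconj (A i))

/-- `P` is the orthogonal projector of a nonzero proper graded invariant subspace for `A`. -/
def GradedInvariantProj {ι ν : Type*} [Fintype ν] [DecidableEq ν]
    (A : ι → Matrix ν ν ℂ) (Z P : Matrix ν ν ℂ) : Prop :=
  P * P = P ∧ Pᴴ = P ∧ P ≠ 0 ∧ P ≠ 1 ∧ P * Z = Z * P ∧ ∀ i, A i * P = P * (A i * P)

/-- A graded irreducible tensor: no nonzero proper graded invariant subspace. -/
def GradedIrreducible {ι ν : Type*} [Fintype ν] [DecidableEq ν]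
    (A : ι → Matrix ν ν ℂ) (Z : Matrix ν ν ℂ) : Prop :=
  ¬ ∃ P, GradedInvariantProj A Z P

/-- A graded normal tensor, `mult = 1` (non-degenerate) or `2` (degenerate):
graded irreducible, `1` is an eigenvalue of the transfer matrix of algebraic multiplicity
`mult`, and all other eigenvalues have modulus `< 1`. -/
def GradedNormal {ι ν : Type*} [Fintype ι] [Fintype ν] [DecidableEq ν]
    (A : ι → Matrix ν ν ℂ) (Z : Matrix ν ν ℂ) (mult : ℕ) : Prop :=
  GradedIrreducible A Z ∧
  (Matrix.charpoly (transfer A)).rootMultiplicity 1 = mult ∧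
  ∀ μ ∈ spectrum ℂ (transfer A), μ ≠ 1 → ‖μ‖ < 1

/-- Graded Canonical Form: `A^i = ⊕ₖ μₖ Aₖ^i` with `Z` block diagonal in the same way and
every block a graded normal tensor. -/
def GCF {ι ν : Type*} [Fintype ι] [Fintype ν] [DecidableEq ν]
    (p : ι → ZMod 2) (A : ι → Matrix ν ν ℂ) (Z : Matrix ν ν ℂ) : Prop :=
  ∃ (g : ℕ) (Dk : Fin g → ℕ) (e : ν ≃ ((k : Fin g) × Fin (Dk k)))
    (μ : Fin g → ℂ)
    (Ak : (k : Fin g) → ι → Matrix (Fin (Dk k)) (Fin (Dk k)) ℂ)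
    (Zk : (k : Fin g) → Matrix (Fin (Dk k)) (Fin (Dk k)) ℂ),
    0 < g ∧
    (∀ i, Matrix.reindex e e (A i) = Matrix.blockDiagonal' (fun k => μ k • Ak k i)) ∧
    Matrix.reindex e e Z = Matrix.blockDiagonal' Zk ∧
    ∀ k, IsParityMatrix (Zk k) ∧ EvenTensor p (Ak k) (Zk k) ∧
      (GradedNormal (Ak k) (Zk k) 1 ∨ GradedNormal (Ak k) (Zk k) 2)

/-- The coefficient `tr(A^{n₁} ⋯ A^{n_N})` of the fMPS with antiperiodic boundary
conditions generated by the tensor `A`. -/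
def mpsCoeff {ι ν : Type*} [Fintype ν] [DecidableEq ν] {N : ℕ}
    (A : ι → Matrix ν ν ℂ) (n : Fin N → ι) : ℂ :=
  ((List.ofFn fun j => A (n j)).prod).trace

/-- The fermionic sign `σ(n,m) = Σ_{k<j} (|n_j|+|m_j|)·|m_k|` of an fMPO matrix element. -/
def mpoSign {ι : Type*} (p : ι → ZMod 2) {N : ℕ} (n m : Fin N → ι) : ZMod 2 :=
  ∑ jk ∈ Finset.univ.filter (fun jk : Fin N × Fin N => jk.2 < jk.1),
    (p (n jk.1) + p (m jk.1)) * p (m jk.2)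

/-- The fMPO with antiperiodic boundary conditions generated by the MPO tensor `U`. -/
def fMPO {ι : Type*} (p : ι → ZMod 2) {ν : Type*} [Fintype ν] [DecidableEq ν]
    (U : ι → ι → Matrix ν ν ℂ) (N : ℕ) :
    Matrix (Fin N → ι) (Fin N → ι) ℂ :=
  Matrix.of fun n m =>
    sgn (mpoSign p n m) * ((List.ofFn fun j => U (n j) (m j)).prod).trace

/-- The fMPO with periodic boundary conditions generated by the MPO tensor `U`
(parity operator `Z` inserted in the trace). -/
def fMPO_PBC {ι : Type*} (p : ι → ZMod 2) {ν : Type*} [Fintype ν] [DecidableEq ν]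
    (Z : Matrix ν ν ℂ) (U : ι → ι → Matrix ν ν ℂ) (N : ℕ) :
    Matrix (Fin N → ι) (Fin N → ι) ℂ :=
  Matrix.of fun n m =>
    sgn (mpoSign p n m) * (Z * (List.ofFn fun j => U (n j) (m j)).prod).trace

/-- The fermionic blocking sign `τ(n,m) = Σ_{j<l} |m_j|·(|n_l|+|m_l|)`. -/
def blockSign {ι : Type*} (p : ι → ZMod 2) {q : ℕ} (n m : Fin q → ι) : ZMod 2 :=
  ∑ jl ∈ Finset.univ.filter (fun jl : Fin q × Fin q => jl.1 < jl.2),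
    p (m jl.1) * (p (n jl.2) + p (m jl.2))

/-- The `q`-fold blocked MPO tensor, with the fermionic blocking signs. -/
def blocked {ι : Type*} (p : ι → ZMod 2) {ν : Type*} [Fintype ν] [DecidableEq ν]
    (U : ι → ι → Matrix ν ν ℂ) (q : ℕ) :
    (Fin q → ι) → (Fin q → ι) → Matrix ν ν ℂ :=
  fun n m => sgn (blockSign p n m) • ((List.ofFn fun j => U (n j) (m j)).prod)

/-- The right rank `r(U)`: rank of the matrix with entry
`(-1)^{|n||m|} (U^{n,m})_{α,β}` in row `(n,β)` and column `(m,α)`. -/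
def rightRank {ι ν : Type*} [Fintype ι] [Fintype ν]
    (p : ι → ZMod 2) (U : ι → ι → Matrix ν ν ℂ) : ℕ :=
  (Matrix.of fun (r c : ι × ν) => sgn (p r.1 * p c.1) * U r.1 c.1 c.2 r.2).rank

/-- The left rank `ℓ(U)`: rank of the matrix with entry `(U^{n,m})_{α,β}`
in row `(n,α)` and column `(m,β)`. -/
def leftRank {ι ν : Type*} [Fintype ι] [Fintype ν]
    (U : ι → ι → Matrix ν ν ℂ) : ℕ :=
  (Matrix.of fun (r c : ι × ν) => U r.1 c.1 r.2 c.2).rank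

/-- The Pauli matrix `σˣ`, indexed by `Bool`. -/
def pauliX : Matrix Bool Bool ℂ := Matrix.of fun a b => if a = b then 0 else 1

/-- The Pauli matrix `σᶻ`, indexed by `Bool`. -/
def pauliZ : Matrix Bool Bool ℂ := Matrix.diagonal (fun b => if b then -1 else 1)

/-- The single-site physical parity matrix `P = diag((-1)^{|i|})`. -/
def singleP {ι : Type*} [DecidableEq ι] (p : ι → ZMod 2) : Matrix ι ι ℂ :=
  Matrix.diagonal (fun i => sgn (p i))

/-- The parity of the doubled physical index `(n,m)` of an MPO tensor. -/
def doubledP {ι : Type*} (p : ι → ZMod 2) : ι × ι → ZMod 2 :=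
  fun nm => p nm.1 + p nm.2

/-- An MPO tensor regarded as a tensor in the doubled physical index. -/
def doubledT {ι ν : Type*} (U : ι → ι → Matrix ν ν ℂ) : ι × ι → Matrix ν ν ℂ :=
  fun nm => U nm.1 nm.2

/-- An MPO tensor rescaled by `c`, regarded as a tensor in the doubled physical index. -/
def mpoScaled {ι ν : Type*} (c : ℂ) (U : ι → ι → Matrix ν ν ℂ) : ι × ι → Matrix ν ν ℂ :=
  fun nm => c • U nm.1 nm.2

/-- The parity operator `σᶻ ⊗ I` on the bond space `Bool × Fin b`. -/
def ZBP (b : ℕ) : Matrix (Bool × Fin b) (Bool × Fin b) ℂ :=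
  pauliZ ⊗ₖ (1 : Matrix (Fin b) (Fin b) ℂ)

/-- Structure of a type II MPO tensor: `U^{n,m} = (σˣ)^{|n|+|m|} ⊗ N^{n,m}`. -/
def TypeIIStruct {d b : ℕ} (p : Fin d → ZMod 2)
    (U : Fin d → Fin d → Matrix (Bool × Fin b) (Bool × Fin b) ℂ) : Prop :=
  ∃ Nm : Fin d → Fin d → Matrix (Fin b) (Fin b) ℂ,
    ∀ n m', U n m' = (pauliX ^ (p n + p m').val) ⊗ₖ Nm n m'

/-- The parity matrix of the product grading on `q` sites. -/
def bigP {d : ℕ} (p : Fin d → ZMod 2) (q : ℕ) :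
    Matrix (Fin q → Fin d) (Fin q → Fin d) ℂ :=
  Matrix.diagonal (fun n => sgn (∑ i, p (n i)))

/-- The Jordan-Wigner embedding at site `j` of a local operator `O` homogeneous of
parity `o`: `P^{|O|} ⊗ ⋯ ⊗ P^{|O|} ⊗ O ⊗ I ⊗ ⋯ ⊗ I`. -/
def jordanWigner {d N : ℕ} (p : Fin d → ZMod 2) (o : ZMod 2)
    (O : Matrix (Fin d) (Fin d) ℂ) (j : Fin N) :
    Matrix (Fin N → Fin d) (Fin N → Fin d) ℂ :=
  Matrix.of fun n m =>
    (∏ l ∈ Finset.univ.filter (fun l : Fin N => l < j),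
      ((singleP p) ^ o.val) (n l) (m l)) *
    O (n j) (m j) *
    (∏ l ∈ Finset.univ.filter (fun l : Fin N => j < l),
      (if n l = m l then (1:ℂ) else 0))


/-! ### Auxiliary lemmas -/

lemma sgn_zero : sgn 0 = 1 := by simp [sgn]

lemma sgn_one : sgn 1 = -1 := by norm_num [sgn, show ((1:ZMod 2)).val = 1 from rfl]

lemma zmod2_cases : ∀ a : ZMod 2, a = 0 ∨ a = 1 := by decide

lemma sign_cases (a b c e : ZMod 2) (h : a + b + c + e = 0) :
    sgn ((c + e) * b) = sgn b * sgn (a * b) := by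
  rcases zmod2_cases a with ha | ha <;> rcases zmod2_cases b with hb | hb <;>
    rcases zmod2_cases c with hc | hc <;> rcases zmod2_cases e with he | he <;>
    subst ha hb hc he <;> simp_all [sgn_zero, sgn_one, show (1+1 : ZMod 2) = 0 from rfl,
      show ((2:ZMod 2)) = 0 from rfl]

lemma quad {ι κ : Type*} [Fintype ι] [Fintype κ] {σ : Type*} [Fintype σ]
    (f : σ → ι → ℂ) (g : σ → κ → ℂ) (f' : ι → σ → ℂ) (g' : κ → σ → ℂ) :
    ∑ jk : ι × κ, (∑ β, f β jk.1 * g β jk.2) * (∑ α, f' jk.1 α * g' jk.2 α)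
      = ∑ β, ∑ α, (∑ j, f β j * f' j α) * (∑ k, g β k * g' k α) := by
  have step : ∀ jk : ι × κ, (∑ β, f β jk.1 * g β jk.2) * (∑ α, f' jk.1 α * g' jk.2 α)
      = ∑ βα : σ × σ, (f βα.1 jk.1 * g βα.1 jk.2) * (f' jk.1 βα.2 * g' jk.2 βα.2) := by
    intro jk
    rw [Finset.sum_mul_sum, Fintype.sum_prod_type]
  rw [Finset.sum_congr rfl (fun jk _ => step jk), Finset.sum_comm, Fintype.sum_prod_type]
  refine Finset.sum_congr rfl fun β _ => ?_
  refine Finset.sum_congr rfl fun α _ => ?_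
  rw [Finset.sum_mul_sum, Fintype.sum_prod_type]
  exact Finset.sum_congr rfl fun j _ => Finset.sum_congr rfl fun k _ => by ring

lemma exists_factorization {m n : Type*} [Fintype m] [Fintype n] [DecidableEq n]
    (A : Matrix m n ℂ) :
    ∃ (B : Matrix m (Fin A.rank) ℂ) (C : Matrix (Fin A.rank) n ℂ), A = B * C := by
  classical
  set W := LinearMap.range A.mulVecLin with hW
  let b : Module.Basis (Fin A.rank) ℂ W := Module.finBasis ℂ W
  have hmem : ∀ k, (fun i' => A i' k) ∈ W := fun k => ⟨Pi.single k 1, by ext i'; simp⟩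
  refine ⟨Matrix.of fun i j => (b j : m → ℂ) i,
          Matrix.of fun j k => b.repr ⟨fun i' => A i' k, hmem k⟩ j, ?_⟩
  ext i k
  have hw := b.sum_repr ⟨fun i' => A i' k, hmem k⟩
  have h0 : A i k = ((⟨fun i' => A i' k, hmem k⟩ : W) : m → ℂ) i := rfl
  rw [Matrix.mul_apply]
  simp only [Matrix.of_apply]
  rw [h0, ← hw]
  simp only [AddSubmonoidClass.coe_finset_sum, Finset.sum_apply, SetLike.val_smul,
    Pi.smul_apply, smul_eq_mul]
  exact Finset.sum_congr rfl fun j _ => by rw [hw]; ring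

/-- For a type I fMPU whose tensor `U/√d` is graded normal
non-degenerate, the product of the right and left ranks is at least `d²`. -/
theorem rank_product_ge {d D : ℕ} (hd : 1 ≤ d) (p : Fin d → ZMod 2)
    (Z : Matrix (Fin D) (Fin D) ℂ) (hZ : IsParityMatrix Z)
    (U : Fin d → Fin d → Matrix (Fin D) (Fin D) ℂ)
    (hE : EvenTensor (doubledP p) (doubledT U) Z)
    (hnorm : GradedNormal (mpoScaled ((Real.sqrt d : ℂ))⁻¹ U) Z 1)
    (hunit : ∀ N : ℕ, 1 ≤ N → fMPO p U N ∈ Matrix.unitaryGroup (Fin N → Fin d) ℂ) :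
    d ^ 2 ≤ rightRank p U * leftRank U := by
  classical
  set MR : Matrix (Fin d × Fin D) (Fin d × Fin D) ℂ :=
    Matrix.of (fun (r c : Fin d × Fin D) => sgn (p r.1 * p c.1) * U r.1 c.1 c.2 r.2) with hMR
  set ML : Matrix (Fin d × Fin D) (Fin d × Fin D) ℂ :=
    Matrix.of (fun (r c : Fin d × Fin D) => U r.1 c.1 r.2 c.2) with hML
  obtain ⟨R₁, R₂, hR⟩ := exists_factorization MR
  obtain ⟨L₁, L₂, hL⟩ := exists_factorization ML
  have hZsq : Z * Z = 1 := by
    ext i j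
    rw [Matrix.mul_apply, Finset.sum_eq_single i
      (fun k _ hk => by rw [hZ.1 (Ne.symm hk), zero_mul]) (by simp)]
    by_cases h : i = j
    · subst h; rcases hZ.2 i with h | h <;> simp [h, Matrix.one_apply]
    · rw [hZ.1 h, mul_zero, Matrix.one_apply_ne h]
  have htr0 : ∀ n0 m0 n1 m1 : Fin d, p n0 + p m0 + p n1 + p m1 ≠ 0 →
      (U n0 m0 * U n1 m1).trace = 0 := by
    intro n0 m0 n1 m1 hpar
    have h1 : Z * U n0 m0 = sgn (p n0 + p m0) • (U n0 m0 * Z) := hE (n0, m0)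
    have h2 : Z * U n1 m1 = sgn (p n1 + p m1) • (U n1 m1 * Z) := hE (n1, m1)
    have hsgn : sgn (p n0 + p m0) * sgn (p n1 + p m1) = -1 := by
      have hone : p n0 + p m0 + p n1 + p m1 = 1 := by
        rcases zmod2_cases (p n0 + p m0 + p n1 + p m1) with h | h
        · exact absurd h hpar
        · exact h
      have hab : (p n0 + p m0) + (p n1 + p m1) = 1 := by rw [← hone]; ring
      rcases zmod2_cases (p n0 + p m0) with ha | ha <;>
        rcases zmod2_cases (p n1 + p m1) with hb | hb <;>
        rw [ha, hb] at hab ⊢ <;>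
        first
          | exact absurd hab (by decide)
          | simp [sgn_zero, sgn_one]
    have hkey : Z * (U n0 m0 * U n1 m1) * Z = (-1 : ℂ) • (U n0 m0 * U n1 m1) := by
      calc Z * (U n0 m0 * U n1 m1) * Z
          = (Z * U n0 m0) * (U n1 m1 * Z) := by
            rw [mul_assoc Z (U n0 m0 * U n1 m1) Z, mul_assoc (U n0 m0) (U n1 m1) Z,
              ← mul_assoc Z (U n0 m0) _]
        _ = (sgn (p n0 + p m0) • (U n0 m0 * Z)) * (U n1 m1 * Z) := by rw [h1]
        _ = sgn (p n0 + p m0) • (U n0 m0 * (Z * U n1 m1) * Z) := by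
            rw [smul_mul_assoc]
            congr 1
            rw [mul_assoc (U n0 m0) Z (U n1 m1 * Z), ← mul_assoc Z (U n1 m1) Z,
              ← mul_assoc (U n0 m0) (Z * U n1 m1) Z]
        _ = sgn (p n0 + p m0) • (U n0 m0 * (sgn (p n1 + p m1) • (U n1 m1 * Z)) * Z) := by
            rw [h2]
        _ = (sgn (p n0 + p m0) * sgn (p n1 + p m1)) • (U n0 m0 * U n1 m1 * (Z * Z)) := by
            rw [mul_smul_comm, smul_mul_assoc, smul_smul]
            congr 1
            rw [mul_assoc (U n0 m0) (U n1 m1 * Z) Z, mul_assoc (U n1 m1) Z Z,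
              ← mul_assoc (U n0 m0) (U n1 m1) (Z * Z)]
        _ = (-1 : ℂ) • (U n0 m0 * U n1 m1) := by rw [hsgn, hZsq, mul_one]
    have htr1 : (Z * (U n0 m0 * U n1 m1) * Z).trace = (U n0 m0 * U n1 m1).trace := by
      rw [Matrix.trace_mul_comm (Z * (U n0 m0 * U n1 m1)) Z, ← mul_assoc, ← mul_assoc,
        hZsq, one_mul]
    rw [hkey, Matrix.trace_smul] at htr1
    simp only [smul_eq_mul, neg_one_mul] at htr1
    linear_combination (-1/2 : ℂ) * htr1
  set G : Matrix (Fin 2 → Fin d) (Fin MR.rank × Fin ML.rank) ℂ :=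
    Matrix.of (fun n jk => ∑ β, R₁ (n 0, β) jk.1 * L₁ (n 1, β) jk.2) with hG
  set H : Matrix (Fin MR.rank × Fin ML.rank) (Fin 2 → Fin d) ℂ :=
    Matrix.of (fun jk m => sgn (p (m 0)) * ∑ α, R₂ jk.1 (m 0, α) * L₂ jk.2 (m 1, α)) with hH
  have key : fMPO p U 2 = G * H := by
    ext n m
    have hlist : (List.ofFn fun j : Fin 2 => U (n j) (m j)).prod
        = U (n 0) (m 0) * U (n 1) (m 1) := by
      simp [List.ofFn_succ]
    have hsig : mpoSign p n m = (p (n 1) + p (m 1)) * p (m 0) := by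
      rw [mpoSign, show (Finset.univ.filter fun jk : Fin 2 × Fin 2 => jk.2 < jk.1)
        = {((1 : Fin 2), (0 : Fin 2))} from by decide, Finset.sum_singleton]
    have htr : (U (n 0) (m 0) * U (n 1) (m 1)).trace
        = ∑ β, ∑ α, U (n 0) (m 0) α β * U (n 1) (m 1) β α := by
      rw [Matrix.trace]
      simp only [Matrix.diag_apply, Matrix.mul_apply]
      rw [Finset.sum_comm]
    have inner : ∀ β α : Fin D,
        (∑ j, R₁ (n 0, β) j * R₂ j (m 0, α)) * (∑ k, L₁ (n 1, β) k * L₂ k (m 1, α))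
          = sgn (p (n 0) * p (m 0)) * (U (n 0) (m 0) α β * U (n 1) (m 1) β α) := by
      intro β α
      rw [← Matrix.mul_apply, ← Matrix.mul_apply, ← hR, ← hL]
      rw [hMR, hML]
      simp only [Matrix.of_apply]
      ring
    have hGH : (G * H) n m
        = sgn (p (m 0)) * (sgn (p (n 0) * p (m 0))
          * ∑ β, ∑ α, U (n 0) (m 0) α β * U (n 1) (m 1) β α) := by
      rw [Matrix.mul_apply]
      simp only [hG, hH, Matrix.of_apply]
      calc ∑ jk : Fin MR.rank × Fin ML.rank,
            (∑ β, R₁ (n 0, β) jk.1 * L₁ (n 1, β) jk.2)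
              * (sgn (p (m 0)) * ∑ α, R₂ jk.1 (m 0, α) * L₂ jk.2 (m 1, α))
          = sgn (p (m 0)) * ∑ jk : Fin MR.rank × Fin ML.rank,
            (∑ β, R₁ (n 0, β) jk.1 * L₁ (n 1, β) jk.2)
              * (∑ α, R₂ jk.1 (m 0, α) * L₂ jk.2 (m 1, α)) := by
            rw [Finset.mul_sum]
            exact Finset.sum_congr rfl fun jk _ => by ring
        _ = sgn (p (m 0)) * ∑ β, ∑ α, (∑ j, R₁ (n 0, β) j * R₂ j (m 0, α))
              * (∑ k, L₁ (n 1, β) k * L₂ k (m 1, α)) := by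
            congr 1
            exact quad (fun β j => R₁ (n 0, β) j) (fun β k => L₁ (n 1, β) k)
              (fun j α => R₂ j (m 0, α)) (fun k α => L₂ k (m 1, α))
        _ = sgn (p (m 0)) * (sgn (p (n 0) * p (m 0))
              * ∑ β, ∑ α, U (n 0) (m 0) α β * U (n 1) (m 1) β α) := by
            congr 1
            rw [Finset.sum_congr rfl fun β _ => Finset.sum_congr rfl fun α _ => inner β α]
            simp only [← Finset.mul_sum]
    simp only [fMPO, Matrix.of_apply]
    rw [hsig, hlist, htr, hGH]
    by_cases hpar : p (n 0) + p (m 0) + p (n 1) + p (m 1) = 0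
    · rw [sign_cases (p (n 0)) (p (m 0)) (p (n 1)) (p (m 1)) hpar]
      ring
    · have h0 : (∑ β, ∑ α, U (n 0) (m 0) α β * U (n 1) (m 1) β α) = 0 := by
        rw [← htr]; exact htr0 _ _ _ _ hpar
      rw [h0]; ring
  have hu : IsUnit (fMPO p U 2) := by
    have h1 := (Matrix.mem_unitaryGroup_iff).1 (hunit 2 (by norm_num))
    have h2 := (Matrix.mem_unitaryGroup_iff').1 (hunit 2 (by norm_num))
    exact ⟨⟨_, star (fMPO p U 2), h1, h2⟩, rfl⟩
  have hrank : (fMPO p U 2).rank = d ^ 2 := by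
    rw [Matrix.rank_of_isUnit _ hu]
    simp [Fintype.card_fun]
  have hle : (fMPO p U 2).rank ≤ MR.rank * ML.rank := by
    rw [key]
    calc (G * H).rank ≤ G.rank := Matrix.rank_mul_le_left G H
      _ ≤ Fintype.card (Fin MR.rank × Fin ML.rank) := Matrix.rank_le_card_width G
      _ = MR.rank * ML.rank := by simp
  have hrr : rightRank p U = MR.rank := rfl
  have hll : leftRank U = ML.rank := rfl
  rw [hrr, hll, ← hrank]
  exact hle

end

end FQCA
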